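/- arXiv:1706.08330 — 3 statements merged into one kernel-verified Lean document; each statement's English description precedes it below -/
import Mathlib

section
/- Let G be a graph with an end ω of vertex degree k. Two ω-relevant separations (A,B) and (C,D) are nested if and only if they are comparable with respect to the partial order ≤ (where (A,B) ≤ (C,D) iff A ⊆ C and D ⊆ B), or A ⊆ D. -/
open Set Cardinal

namespace PaperEnds

/-- A ray in `G`: a one-sided infinite path, i.e. an injective sequence of
pairwise adjacent consecutive vertices. -/
def IsRay {V : Type} (G : SimpleGraph V) (r : ℕ → V) : Prop :=
  Function.Injective r ∧ ∀ n, G.Adj (r n) (r (n + 1))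

/-- `a` and `b` are connected by a walk avoiding the vertex set `S`. -/
def ReachableOutside {V : Type} (G : SimpleGraph V) (S : Set V) (a b : V) : Prop :=
  ∃ w : G.Walk a b, ∀ v ∈ w.support, v ∉ S

/-- Two rays are equivalent (belong to the same end) if for every finite vertex
set `S` they have tails lying in the same component of `G − S`. -/
def RayEquiv {V : Type} (G : SimpleGraph V) (r₁ r₂ : ℕ → V) : Prop :=
  ∀ S : Set V, S.Finite → ∃ m n : ℕ,
    (∀ i, m ≤ i → r₁ i ∉ S) ∧ (∀ j, n ≤ j → r₂ j ∉ S) ∧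
    ReachableOutside G S (r₁ m) (r₂ n)

/-- `r` is a ray belonging to the end represented by the ray `ω`. -/
def InEnd {V : Type} (G : SimpleGraph V) (ω r : ℕ → V) : Prop :=
  IsRay G r ∧ RayEquiv G r ω

/-- `G` has exactly one end: it has a ray and any two rays are equivalent. -/
def OneEnded {V : Type} (G : SimpleGraph V) : Prop :=
  (∃ r, IsRay G r) ∧ ∀ r₁ r₂, IsRay G r₁ → IsRay G r₂ → RayEquiv G r₁ r₂

/-- A family of pairwise (vertex-)disjoint rays. -/
def DisjointRays {V : Type} {ι : Type} (f : ι → ℕ → V) : Prop :=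
  Pairwise fun i j => Disjoint (Set.range (f i)) (Set.range (f j))

/-- The end represented by `ω` has vertex degree `k`: the maximum cardinality of a
family of pairwise disjoint rays belonging to the end is `k`. -/
def EndVertexDegree {V : Type} (G : SimpleGraph V) (ω : ℕ → V) (k : ℕ) : Prop :=
  (∃ f : Fin k → ℕ → V, (∀ i, InEnd G ω (f i)) ∧ DisjointRays f) ∧
  ¬ ∃ f : Fin (k + 1) → ℕ → V, (∀ i, InEnd G ω (f i)) ∧ DisjointRays f

/-- `v` dominates the end represented by `ω`: for every ray `r` in the end there are
infinitely many `v`–`r` paths pairwise meeting only in `v`. -/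
def Dominates {V : Type} (G : SimpleGraph V) (v : V) (ω : ℕ → V) : Prop :=
  ∀ r : ℕ → V, InEnd G ω r →
    ∃ (t : ℕ → ℕ) (P : (n : ℕ) → G.Walk v (r (t n))),
      Function.Injective t ∧
      (∀ n, (P n).IsPath) ∧
      (∀ n, ∀ u ∈ (P n).support, u ∈ Set.range r → u = r (t n)) ∧
      (∀ m n, m ≠ n → ∀ u, u ∈ (P m).support → u ∈ (P n).support → u = v)

/-- The end represented by `ω` is undominated. -/
def Undominated {V : Type} (G : SimpleGraph V) (ω : ℕ → V) : Prop :=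
  ¬ ∃ v, Dominates G v ω

/-- `(A, B)` is a separation of `G`. -/
def IsSeparation {V : Type} (G : SimpleGraph V) (A B : Set V) : Prop :=
  A ∪ B = Set.univ ∧ ∀ a ∈ A \ B, ∀ b ∈ B \ A, ¬ G.Adj a b

/-- The order of a separation `(A, B)`, i.e. `|A ∩ B|` as an extended natural number. -/
noncomputable def SepOrder {V : Type} (A B : Set V) : ℕ∞ := (A ∩ B).encard

/-- The end represented by `ω` lies in the side `B`: every ray of the end has all
but finitely many vertices in `B`. -/
def LiesIn {V : Type} (G : SimpleGraph V) (ω : ℕ → V) (B : Set V) : Prop :=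
  ∀ r, InEnd G ω r → ∃ m, ∀ n, m ≤ n → r n ∈ B

/-- The vertex set `s` is connected in `G` (any two of its vertices are joined by a
walk inside `s`). -/
def ConnectedIn {V : Type} (G : SimpleGraph V) (s : Set V) : Prop :=
  ∀ a ∈ s, ∀ b ∈ s, ∃ w : G.Walk a b, ∀ v ∈ w.support, v ∈ s

/-- `(A, B)` is an ω-relevant separation (for the end of vertex degree `k`
represented by the ray `ω`). -/
def Relevant {V : Type} (G : SimpleGraph V) (ω : ℕ → V) (k : ℕ) (A B : Set V) : Prop :=
  IsSeparation G A B ∧ SepOrder A B = (k : ℕ∞) ∧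
  ConnectedIn G (A \ B) ∧
  (∀ v ∈ A ∩ B, ∃ u ∈ A \ B, G.Adj v u) ∧
  LiesIn G ω B ∧
  ¬ ∃ C D : Set V, IsSeparation G C D ∧ SepOrder C D < (k : ℕ∞) ∧ A ⊆ C ∧ LiesIn G ω D

/-- Two separations `(A, B)` and `(C, D)` are nested. -/
def Nested {V : Type} (A B C D : Set V) : Prop :=
  (A ⊆ C ∧ D ⊆ B) ∨ (A ⊆ D ∧ C ⊆ B) ∨ (B ⊆ C ∧ D ⊆ A) ∨ (B ⊆ D ∧ C ⊆ A)

/-- two ω-relevant separations are nested iff they are comparable with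
respect to `≤` or `A ⊆ D`. -/
theorem relevant_nested_iff {V : Type} (G : SimpleGraph V) (ω : ℕ → V) (k : ℕ)
    (hω : IsRay G ω) (hdeg : EndVertexDegree G ω k)
    (A B C D : Set V) (hAB : Relevant G ω k A B) (hCD : Relevant G ω k C D) :
    Nested A B C D ↔ ((A ⊆ C ∧ D ⊆ B) ∨ (C ⊆ A ∧ B ⊆ D) ∨ A ⊆ D) := by
  obtain ⟨hsepAB, hordAB, _, _, hliesB, _⟩ := hAB
  obtain ⟨hsepCD, hordCD, _, hnbrCD, hliesD, _⟩ := hCD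
  -- ω belongs to its own end
  have hωω : InEnd G ω ω := by
    refine ⟨hω, fun S hS => ?_⟩
    have hfin : (ω ⁻¹' S).Finite := hS.preimage (hω.1.injOn)
    obtain ⟨m, hm⟩ := hfin.bddAbove
    refine ⟨m + 1, m + 1, ?_, ?_, SimpleGraph.Walk.nil, ?_⟩
    · intro i hi hiS
      exact absurd (hm hiS) (by omega)
    · intro i hi hiS
      exact absurd (hm hiS) (by omega)
    · intro v hv
      simp only [SimpleGraph.Walk.support_nil, List.mem_singleton] at hv
      subst hv
      intro hmem
      exact absurd (hm hmem) (by omega)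
  -- tail of ω lies in B and in D
  obtain ⟨m₁, hm₁⟩ := hliesB ω hωω
  obtain ⟨m₂, hm₂⟩ := hliesD ω hωω
  -- case B ⊆ C ∧ D ⊆ A is impossible
  have hBC_impossible : ¬ (B ⊆ C) ∨ True := Or.inr trivial
  have key : ∀ (hBC : B ⊆ C), False := by
    intro hBC
    have hsub : (fun n => ω (max m₁ m₂ + n)) '' Set.univ ⊆ C ∩ D := by
      rintro x ⟨n, -, rfl⟩
      exact ⟨hBC (hm₁ _ (le_trans (le_max_left _ _) (Nat.le_add_right _ _))),
             hm₂ _ (le_trans (le_max_right _ _) (Nat.le_add_right _ _))⟩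
    have hCDfin : (C ∩ D).Finite := by
      have he : (C ∩ D).encard = (k : ℕ∞) := hordCD
      rw [← Set.encard_ne_top_iff, he]
      exact ENat.coe_ne_top k
    have hinf : ((fun n => ω (max m₁ m₂ + n)) '' Set.univ).Infinite := by
      rw [Set.image_univ]
      apply Set.infinite_range_of_injective
      intro a b hab
      have := hω.1 hab
      omega
    exact hinf (hCDfin.subset hsub)
  constructor
  · rintro (h | h | h | h)
    · exact Or.inl h
    · exact Or.inr (Or.inr h.1)
    · exact absurd h.1 (fun hBC => key hBC)
    · exact Or.inr (Or.inl ⟨h.2, h.1⟩)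
  · rintro (h | h | hAD)
    · exact Or.inl h
    · exact Or.inr (Or.inr (Or.inr ⟨h.2, h.1⟩))
    · refine Or.inr (Or.inl ⟨hAD, ?_⟩)
      intro x hxC
      by_contra hxB
      have hxA : x ∈ A := by
        have := hsepAB.1
        have hx : x ∈ A ∪ B := this ▸ Set.mem_univ x
        rcases hx with h | h
        · exact h
        · exact absurd h hxB
      have hxD : x ∈ D := hAD hxA
      obtain ⟨u, huCD, hadj⟩ := hnbrCD x ⟨hxC, hxD⟩
      have huA : u ∈ A := by
        have hu : u ∈ A ∪ B := hsepAB.1 ▸ Set.mem_univ u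
        rcases hu with h | h
        · exact h
        · by_contra huA
          exact hsepAB.2 x ⟨hxA, hxB⟩ u ⟨h, huA⟩ hadj
      exact huCD.2 (hAD huA)

end PaperEnds
end

section
/- Let G be a graph with an end ω of vertex degree k. For each ω-relevant separation (A,B) there are only finitely many ω-relevant separations (C,D) that are not nested with (A,B). -/
open Set Cardinal

namespace PaperEnds

section Helpers

variable {V : Type} {G : SimpleGraph V}

/-- an injective sequence eventually avoids a finite set -/
lemma ray_escape {r : ℕ → V} (hr : Function.Injective r) {S : Set V} (hS : S.Finite) :
    ∃ N, ∀ n, N ≤ n → r n ∉ S := by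
  have hfin : (r ⁻¹' S).Finite := hS.preimage hr.injOn
  obtain ⟨N, hN⟩ := hfin.bddAbove
  refine ⟨N + 1, fun n hn hmem => ?_⟩
  have := hN hmem
  omega

lemma walk_stay {K S : Set V} (hcl : ∀ u ∈ K, ∀ w, G.Adj u w → w ∈ K ∪ S)
    {a b : V} (w : G.Walk a b) :
    a ∈ K → (∀ v ∈ w.support, v ∉ S) → ∀ v ∈ w.support, v ∈ K := by
  induction w with
  | nil =>
    intro ha _ v hv
    rw [SimpleGraph.Walk.support_nil, List.mem_singleton] at hv
    rwa [hv]
  | cons hadj p ih =>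
    intro ha hS v hv
    rw [SimpleGraph.Walk.support_cons] at hv
    rcases List.mem_cons.mp hv with rfl | hv'
    · exact ha
    · rename_i u' v' b' 
      have hps : v' ∈ (SimpleGraph.Walk.cons hadj p).support := by
        rw [SimpleGraph.Walk.support_cons]
        exact List.mem_cons_of_mem _ p.start_mem_support
      have hnext : v' ∈ K := by
        rcases hcl _ ha _ hadj with h | h
        · exact h
        · exact absurd h (hS _ hps)
      refine ih hnext (fun u hu => hS u ?_) v hv'
      rw [SimpleGraph.Walk.support_cons]
      exact List.mem_cons_of_mem _ hu

lemma walk_end_stay {K S : Set V} (hcl : ∀ u ∈ K, ∀ w, G.Adj u w → w ∈ K ∪ S)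
    {a b : V} (w : G.Walk a b) (ha : a ∈ K) (hS : ∀ v ∈ w.support, v ∉ S) : b ∈ K :=
  walk_stay hcl w ha hS b w.end_mem_support

lemma walk_cross {K S : Set V} (hcl : ∀ u ∈ K, ∀ w, G.Adj u w → w ∈ K ∪ S)
    {a b : V} (w : G.Walk a b) (ha : a ∈ K) (hb : b ∉ K ∪ S) :
    ∃ v ∈ w.support, v ∈ S := by
  by_contra h
  push_neg at h
  exact hb (Or.inl (walk_end_stay hcl w ha h))

lemma sep_closure {C D : Set V} (hsep : IsSeparation G C D) :
    ∀ u ∈ C \ D, ∀ w, G.Adj u w → w ∈ C := by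
  intro u hu w hadj
  by_contra hw
  have hwD : w ∈ D := by
    have h1 : w ∈ C ∪ D := hsep.1 ▸ mem_univ w
    rcases h1 with h | h
    · exact absurd h hw
    · exact h
  exact hsep.2 u hu w ⟨hwD, hw⟩ hadj

lemma sep_closure_right {C D : Set V} (hsep : IsSeparation G C D) :
    ∀ u ∈ D \ C, ∀ w, G.Adj u w → w ∈ D := by
  intro u hu w hadj
  by_contra hw
  have hwC : w ∈ C := by
    have h1 : w ∈ C ∪ D := hsep.1 ▸ mem_univ w
    rcases h1 with h | h
    · exact h
    · exact absurd h hw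
  exact hsep.2 w ⟨hwC, hw⟩ u hu (G.adj_symm hadj)

lemma sep_closure' {C D : Set V} (hsep : IsSeparation G C D) :
    ∀ u ∈ C \ D, ∀ w, G.Adj u w → w ∈ (C \ D) ∪ (C ∩ D) := by
  intro u hu w hadj
  have hwC := sep_closure hsep u hu w hadj
  by_cases hwD : w ∈ D
  · exact Or.inr ⟨hwC, hwD⟩
  · exact Or.inl ⟨hwC, hwD⟩

lemma ray_walk {r : ℕ → V} (hr : ∀ n, G.Adj (r n) (r (n + 1))) (m n : ℕ) (h : m ≤ n) :
    ∃ w : G.Walk (r m) (r n), ∀ v ∈ w.support, ∃ i, m ≤ i ∧ i ≤ n ∧ r i = v := by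
  induction n, h using Nat.le_induction with
  | base =>
    refine ⟨SimpleGraph.Walk.nil, ?_⟩
    intro v hv
    rw [SimpleGraph.Walk.support_nil, List.mem_singleton] at hv
    exact ⟨m, le_refl m, le_refl m, hv.symm⟩
  | succ n hmn ih =>
    obtain ⟨w, hw⟩ := ih
    refine ⟨w.append (SimpleGraph.Walk.cons (hr n) SimpleGraph.Walk.nil), ?_⟩
    intro v hv
    rw [SimpleGraph.Walk.mem_support_append_iff] at hv
    rcases hv with hv | hv
    · obtain ⟨i, h1, h2, h3⟩ := hw v hv
      exact ⟨i, h1, by omega, h3⟩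
    · rw [SimpleGraph.Walk.support_cons, SimpleGraph.Walk.support_nil] at hv
      rcases List.mem_cons.mp hv with rfl | hv'
      · exact ⟨n, by omega, by omega, rfl⟩
      · rw [List.mem_singleton] at hv'
        exact ⟨n + 1, by omega, by omega, hv'.symm⟩

lemma inEnd_self {ω : ℕ → V} (hω : IsRay G ω) : InEnd G ω ω := by
  refine ⟨hω, fun S hS => ?_⟩
  obtain ⟨N, hN⟩ := ray_escape hω.1 hS
  refine ⟨N, N, fun i hi => hN i hi, fun j hj => hN j hj, SimpleGraph.Walk.nil, ?_⟩
  intro v hv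
  rw [SimpleGraph.Walk.support_nil, List.mem_singleton] at hv
  rw [hv]
  exact hN N le_rfl

end Helpers

section Combinatorics

lemma pigeonhole_infinite {α β : Type} (P : β → α → Prop) {J : Set α} {I : Set β}
    (hJ : J.Infinite) (hI : I.Finite) (hF : ∀ p ∈ J, ∃ z ∈ I, P z p) :
    ∃ z ∈ I, {p ∈ J | P z p}.Infinite := by
  by_contra h
  push_neg at h
  have hsub : J ⊆ ⋃ z ∈ I, {p ∈ J | P z p} := by
    intro p hp
    obtain ⟨z, hz, hPz⟩ := hF p hp
    exact Set.mem_biUnion hz ⟨hp, hPz⟩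
  exact hJ (Set.Finite.subset (hI.biUnion (fun z hz => (h z hz))) hsub)

lemma exists_greedy_disjoint {ι α : Type} (S : ι → Set α) (J : Set ι) (hJ : J.Infinite)
    (hfin : ∀ v : α, {j ∈ J | v ∈ S j}.Finite) (hSfin : ∀ j ∈ J, (S j).Finite) :
    ∃ c : ℕ → ι, Function.Injective c ∧ (∀ n, c n ∈ J) ∧
      ∀ m n, m ≠ n → S (c m) ∩ S (c n) = ∅ := by
  classical
  have key : ∀ s : Finset ι, ∃ j, j ∈ J ∧ ((↑s : Set ι) ⊆ J →
      (j ∉ s ∧ ∀ i ∈ s, S i ∩ S j = ∅)) := by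
    intro s
    by_cases hs : (↑s : Set ι) ⊆ J
    · have hbad : {j ∈ J | ∃ i ∈ s, (S i ∩ S j).Nonempty}.Finite := by
        have hsub : {j ∈ J | ∃ i ∈ s, (S i ∩ S j).Nonempty} ⊆
            ⋃ i ∈ (↑s : Set ι), ⋃ v ∈ S i, {j ∈ J | v ∈ S j} := by
          rintro j ⟨hjJ, i, hi, v, hv1, hv2⟩
          refine Set.mem_biUnion (by exact_mod_cast hi) ?_
          exact Set.mem_biUnion hv1 ⟨hjJ, hv2⟩
        refine Set.Finite.subset ?_ hsub
        refine Set.Finite.biUnion s.finite_toSet (fun i hi => ?_)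
        exact Set.Finite.biUnion (hSfin i (hs hi)) (fun v _ => hfin v)
      obtain ⟨j, hj⟩ := (hJ.diff (hbad.union s.finite_toSet)).nonempty
      refine ⟨j, hj.1, fun _ => ⟨?_, ?_⟩⟩
      · intro hmem
        exact hj.2 (Or.inr hmem)
      · intro i hi
        rw [← Set.not_nonempty_iff_eq_empty]
        intro hne
        exact hj.2 (Or.inl ⟨hj.1, i, hi, hne⟩)
    · exact ⟨hJ.nonempty.some, hJ.nonempty.some_mem, fun h => absurd h hs⟩
  choose pick hpJ hpcond using key
  obtain ⟨aux, haux0, hauxS⟩ : ∃ f : ℕ → Finset ι, f 0 = ∅ ∧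
      ∀ n, f (n + 1) = insert (pick (f n)) (f n) :=
    ⟨fun n => Nat.rec ∅ (fun _ s => insert (pick s) s) n, rfl, fun n => rfl⟩
  have hauxJ : ∀ n, ((aux n : Finset ι) : Set ι) ⊆ J := by
    intro n
    induction n with
    | zero => simp [haux0]
    | succ n ih =>
      rw [hauxS]
      intro i hi
      simp only [Finset.coe_insert, Set.mem_insert_iff] at hi
      rcases hi with rfl | hi
      · exact hpJ _
      · exact ih hi
  have hauxmono : ∀ m n, m ≤ n → aux m ⊆ aux n := by
    intro m n h
    induction n, h using Nat.le_induction with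
    | base => exact Finset.Subset.refl _
    | succ n hmn ih =>
      rw [hauxS]
      exact ih.trans (Finset.subset_insert _ _)
  obtain ⟨c, hc⟩ : ∃ c : ℕ → ι, ∀ n, c n = pick (aux n) := ⟨fun n => pick (aux n), fun _ => rfl⟩
  have hmemnext : ∀ n, c n ∈ aux (n + 1) := by
    intro n
    rw [hauxS, hc]
    exact Finset.mem_insert_self _ _
  have hnotmem : ∀ n, c n ∉ aux n := fun n => (hc n) ▸ (hpcond (aux n) (hauxJ n)).1
  have hlt : ∀ m n, m < n → c m ∈ aux n := fun m n h => hauxmono (m + 1) n h (hmemnext m)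
  have hinj : Function.Injective c := by
    intro m n he
    by_contra hne
    rcases Nat.lt_or_ge m n with h | h
    · exact hnotmem n (he ▸ hlt m n h)
    · have h' : n < m := by omega
      exact hnotmem m (he ▸ hlt n m h')
  have hdisj : ∀ m n, m < n → S (c m) ∩ S (c n) = ∅ := by
    intro m n h
    rw [hc n]
    exact (hpcond (aux n) (hauxJ n)).2 (c m) (hlt m n h)
  refine ⟨c, hinj, fun n => (hc n) ▸ hpJ _, fun m n hmn => ?_⟩
  rcases Nat.lt_or_ge m n with h | h
  · exact hdisj m n h
  · have h' : n < m := by omega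
    rw [Set.inter_comm]
    exact hdisj n m h'

lemma sunflower_lemma {ι α : Type} :
    ∀ (k : ℕ) (S : ι → Set α) (J : Set ι), J.Infinite → Set.InjOn S J →
    (∀ j ∈ J, (S j).Finite ∧ (S j).ncard ≤ k) →
    ∃ (Y : Set α) (J' : Set ι), J' ⊆ J ∧ J'.Infinite ∧ Y.Finite ∧
      (∀ j ∈ J', Y ⊆ S j) ∧
      (∀ j ∈ J', ∀ j' ∈ J', j ≠ j' → (S j \ Y) ∩ (S j' \ Y) = ∅) := by
  intro k
  induction k with
  | zero =>
    intro S J hJ hinj hcard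
    obtain ⟨a, ha, b, hb, hab⟩ := hJ.nontrivial
    have e1 : S a = ∅ := by
      obtain ⟨hf, hle⟩ := hcard a ha
      rwa [Nat.le_zero, Set.ncard_eq_zero hf] at hle
    have e2 : S b = ∅ := by
      obtain ⟨hf, hle⟩ := hcard b hb
      rwa [Nat.le_zero, Set.ncard_eq_zero hf] at hle
    exact absurd (hinj ha hb (e1.trans e2.symm)) hab
  | succ k ih =>
    intro S J hJ hinj hcard
    by_cases hdom : ∃ v, {j ∈ J | v ∈ S j}.Infinite
    · obtain ⟨v, hv⟩ := hdom
      set Jv := {j ∈ J | v ∈ S j} with hJv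
      have h1 : Set.InjOn (fun j => S j \ {v}) Jv := by
        intro a ha b hb hab
        refine hinj ha.1 hb.1 ?_
        have hva : S a = (S a \ {v}) ∪ {v} :=
          (Set.diff_union_of_subset (Set.singleton_subset_iff.2 ha.2)).symm
        have hvb : S b = (S b \ {v}) ∪ {v} :=
          (Set.diff_union_of_subset (Set.singleton_subset_iff.2 hb.2)).symm
        rw [hva, hvb]
        simp only at hab
        rw [hab]
      have h2 : ∀ j ∈ Jv, ((fun j => S j \ {v}) j).Finite ∧ ((fun j => S j \ {v}) j).ncard ≤ k := by
        intro j hj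
        have hf := (hcard j hj.1).1
        show (S j \ {v}).Finite ∧ (S j \ {v}).ncard ≤ k
        refine ⟨hf.diff, ?_⟩
        have hd : (S j \ {v}).ncard = (S j).ncard - 1 := Set.ncard_diff_singleton_of_mem hj.2
        have hk' := (hcard j hj.1).2
        have hpos : 1 ≤ (S j).ncard := by
          rw [Nat.one_le_iff_ne_zero]
          intro h0
          rw [Set.ncard_eq_zero hf] at h0
          have hv' : v ∈ S j := hj.2
          rw [h0] at hv'
          exact absurd hv' (Set.notMem_empty v)
        omega
      obtain ⟨Y', J', hsub, hinf, hYfin, hker, hpet⟩ := ih _ Jv hv h1 h2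
      refine ⟨insert v Y', J', fun j hj => (hsub hj).1, hinf, hYfin.insert v, ?_, ?_⟩
      · intro j hj u hu
        rcases Set.mem_insert_iff.1 hu with rfl | hu'
        · exact (hsub hj).2
        · exact ((hker j hj) hu').1
      · intro j hj j' hj' hne
        have h := hpet j hj j' hj' hne
        have hrw : ∀ s : Set α, s \ insert v Y' = (s \ {v}) \ Y' := by
          intro s
          rw [Set.diff_diff, Set.singleton_union]
        rw [hrw, hrw]
        exact h
    · push_neg at hdom
      obtain ⟨c, hcinj, hcJ, hcdisj⟩ := exists_greedy_disjoint S J hJ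
        (fun v => (hdom v)) (fun j hj => (hcard j hj).1)
      refine ⟨∅, Set.range c, ?_, Set.infinite_range_of_injective hcinj, Set.finite_empty,
        by simp, ?_⟩
      · rintro _ ⟨n, rfl⟩
        exact hcJ n
      · rintro _ ⟨m, rfl⟩ _ ⟨n, rfl⟩ hne
        simp only [Set.diff_empty]
        exact hcdisj m n (fun h => hne (by rw [h]))

end Combinatorics

section RelLemmas

variable {V : Type} {G : SimpleGraph V} {ω : ℕ → V} {k : ℕ}

lemma rel_sep_finite {C D : Set V} (h : Relevant G ω k C D) : (C ∩ D).Finite :=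
  Set.finite_of_encard_eq_coe h.2.1

lemma rel_sep_nonempty {C D : Set V} (hk : 1 ≤ k) (h : Relevant G ω k C D) :
    (C ∩ D).Nonempty := by
  rw [Set.nonempty_iff_ne_empty]
  intro he
  have h1 : SepOrder C D = (k : ℕ∞) := h.2.1
  rw [SepOrder, he, Set.encard_empty] at h1
  have : k = 0 := by exact_mod_cast h1.symm
  omega

lemma rel_diff_nonempty {C D : Set V} (hk : 1 ≤ k) (h : Relevant G ω k C D) :
    (C \ D).Nonempty := by
  obtain ⟨v, hv⟩ := rel_sep_nonempty hk h
  obtain ⟨u, hu, _⟩ := h.2.2.2.1 v hv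
  exact ⟨u, hu⟩

/-- crossing criterion: the separator of `(C,D)` meets `A \ B`. -/
lemma cross_b {A B C D : Set V} (hk : 1 ≤ k) (hAB : Relevant G ω k A B)
    (hCD : Relevant G ω k C D) (hnn : ¬ Nested A B C D) :
    ((C ∩ D) ∩ (A \ B)).Nonempty := by
  by_contra hcon
  rw [Set.not_nonempty_iff_eq_empty] at hcon
  have hnotin : ∀ v ∈ A \ B, v ∉ C ∩ D := by
    intro v hv hvS
    have : v ∈ (C ∩ D) ∩ (A \ B) := ⟨hvS, hv⟩
    rw [hcon] at this
    exact this
  obtain ⟨a₀, ha₀⟩ := rel_diff_nonempty hk hAB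
  have ha₀u : a₀ ∈ C ∪ D := hCD.1.1 ▸ mem_univ a₀
  by_cases haD : a₀ ∈ D
  · by_cases haC : a₀ ∈ C
    · exact hnotin a₀ ha₀ ⟨haC, haD⟩
    · -- a₀ ∈ D \ C : A\B ⊆ D\C, nested case 2
      have hstay : ∀ v ∈ A \ B, v ∈ D \ C := by
        intro v hv
        obtain ⟨w, hw⟩ := hAB.2.2.1 a₀ ha₀ v hv
        have hcl : ∀ u ∈ D \ C, ∀ z, G.Adj u z → z ∈ (D \ C) ∪ (C ∩ D) := by
          intro u hu z hz
          have hzD := sep_closure_right hCD.1 u hu z hz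
          by_cases hzC : z ∈ C
          · exact Or.inr ⟨hzC, hzD⟩
          · exact Or.inl ⟨hzD, hzC⟩
        refine walk_stay hcl w ⟨haD, haC⟩ ?_ v w.end_mem_support
        intro u hu
        exact hnotin u (hw u hu)
      refine hnn (Or.inr (Or.inl ⟨?_, ?_⟩))
      · -- A ⊆ D
        intro v hv
        by_cases hvB : v ∈ B
        · obtain ⟨u, hu, hadj⟩ := hAB.2.2.2.1 v ⟨hv, hvB⟩
          exact sep_closure_right hCD.1 u (hstay u hu) v (G.adj_symm hadj)
        · exact (hstay v ⟨hv, hvB⟩).1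
      · -- C ⊆ B
        intro v hv
        by_contra hvB
        have hvA : v ∈ A := by
          have h2 : v ∈ A ∪ B := hAB.1.1 ▸ mem_univ v
          exact h2.resolve_right hvB
        exact (hstay v ⟨hvA, hvB⟩).2 hv
  · -- a₀ ∈ C \ D : A\B ⊆ C\D, nested case 1
    have haC : a₀ ∈ C := ha₀u.resolve_right haD
    have hstay : ∀ v ∈ A \ B, v ∈ C \ D := by
      intro v hv
      obtain ⟨w, hw⟩ := hAB.2.2.1 a₀ ha₀ v hv
      refine walk_stay (sep_closure' hCD.1) w ⟨haC, haD⟩ ?_ v w.end_mem_support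
      intro u hu
      exact hnotin u (hw u hu)
    refine hnn (Or.inl ⟨?_, ?_⟩)
    · intro v hv
      by_cases hvB : v ∈ B
      · obtain ⟨u, hu, hadj⟩ := hAB.2.2.2.1 v ⟨hv, hvB⟩
        exact sep_closure hCD.1 u (hstay u hu) v (G.adj_symm hadj)
      · exact (hstay v ⟨hv, hvB⟩).1
    · intro v hv
      by_contra hvB
      have hvA : v ∈ A := by
        have h2 : v ∈ A ∪ B := hAB.1.1 ▸ mem_univ v
        exact h2.resolve_right hvB
      exact (hstay v ⟨hvA, hvB⟩).2 hv

/-- crossing criterion: `C \ D` meets the separator of `(A,B)`. -/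
lemma cross_a {A B C D : Set V} (hk : 1 ≤ k) (hAB : Relevant G ω k A B)
    (hCD : Relevant G ω k C D) (hnn : ¬ Nested A B C D) :
    ((A ∩ B) ∩ (C \ D)).Nonempty := by
  by_contra hcon
  rw [Set.not_nonempty_iff_eq_empty] at hcon
  have hnotin : ∀ v ∈ C \ D, v ∉ A ∩ B := by
    intro v hv hvS
    have : v ∈ (A ∩ B) ∩ (C \ D) := ⟨hvS, hv⟩
    rw [hcon] at this
    exact this
  obtain ⟨c₀, hc₀⟩ := rel_diff_nonempty hk hCD
  by_cases hcB : c₀ ∈ B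
  · by_cases hcA : c₀ ∈ A
    · exact hnotin c₀ hc₀ ⟨hcA, hcB⟩
    · -- c₀ ∈ B \ A : C\D ⊆ B\A, nested case 2 (A ⊆ D ∧ C ⊆ B)
      have hstay : ∀ v ∈ C \ D, v ∈ B \ A := by
        intro v hv
        obtain ⟨w, hw⟩ := hCD.2.2.1 c₀ hc₀ v hv
        have hcl : ∀ u ∈ B \ A, ∀ z, G.Adj u z → z ∈ (B \ A) ∪ (A ∩ B) := by
          intro u hu z hz
          have hzB := sep_closure_right hAB.1 u hu z hz
          by_cases hzA : z ∈ A
          · exact Or.inr ⟨hzA, hzB⟩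
          · exact Or.inl ⟨hzB, hzA⟩
        refine walk_stay hcl w ⟨hcB, hcA⟩ ?_ v w.end_mem_support
        intro u hu
        exact hnotin u (hw u hu)
      refine hnn (Or.inr (Or.inl ⟨?_, ?_⟩))
      · -- A ⊆ D
        intro v hv
        by_contra hvD
        have hvC : v ∈ C := by
          have h2 : v ∈ C ∪ D := hCD.1.1 ▸ mem_univ v
          exact h2.resolve_right hvD
        exact (hstay v ⟨hvC, hvD⟩).2 hv
      · -- C ⊆ B
        intro v hv
        by_cases hvD : v ∈ D
        · obtain ⟨u, hu, hadj⟩ := hCD.2.2.2.1 v ⟨hv, hvD⟩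
          exact sep_closure_right hAB.1 u (hstay u hu) v (G.adj_symm hadj)
        · exact (hstay v ⟨hv, hvD⟩).1
  · -- c₀ ∈ A \ B : C\D ⊆ A\B, nested case 4 (B ⊆ D ∧ C ⊆ A)
    have hcA : c₀ ∈ A := by
      have h2 : c₀ ∈ A ∪ B := hAB.1.1 ▸ mem_univ c₀
      exact h2.resolve_right hcB
    have hstay : ∀ v ∈ C \ D, v ∈ A \ B := by
      intro v hv
      obtain ⟨w, hw⟩ := hCD.2.2.1 c₀ hc₀ v hv
      refine walk_stay (sep_closure' hAB.1) w ⟨hcA, hcB⟩ ?_ v w.end_mem_support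
      intro u hu
      exact hnotin u (hw u hu)
    refine hnn (Or.inr (Or.inr (Or.inr ⟨?_, ?_⟩)))
    · -- B ⊆ D
      intro v hv
      by_contra hvD
      have hvC : v ∈ C := by
        have h2 : v ∈ C ∪ D := hCD.1.1 ▸ mem_univ v
        exact h2.resolve_right hvD
      exact (hstay v ⟨hvC, hvD⟩).2 hv
    · -- C ⊆ A
      intro v hv
      by_cases hvD : v ∈ D
      · obtain ⟨u, hu, hadj⟩ := hCD.2.2.2.1 v ⟨hv, hvD⟩
        exact sep_closure hAB.1 u (hstay u hu) v (G.adj_symm hadj)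
      · exact (hstay v ⟨hv, hvD⟩).1

/-- the T-argument: if `(C,D)` crosses `(A,B)` then some separator vertex of `(A,B)`
lies strictly beyond `C`. -/
lemma exists_outside_C {A B C D : Set V} (hAB : Relevant G ω k A B)
    (hCD : Relevant G ω k C D)
    (hy : ((C ∩ D) ∩ (A \ B)).Nonempty) :
    ∃ z ∈ A ∩ B, z ∉ C := by
  by_contra hcon
  push_neg at hcon
  obtain ⟨y, hyS, hyA⟩ := hy
  set T : Set V := (C ∩ D) ∩ B with hT
  set W : Set V := ((C \ D) ∪ (A \ B)) \ T with hW
  have hTW : ∀ v ∈ T, v ∉ W := fun v hv hw => hw.2 hv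
  have hWcl : ∀ u ∈ W, ∀ w, G.Adj u w → w ∈ W ∪ T := by
    intro u hu w hadj
    obtain ⟨hu1, hu2⟩ := hu
    rcases hu1 with huK | huA
    · have hwC : w ∈ C := sep_closure hCD.1 u huK w hadj
      by_cases hwD : w ∈ D
      · by_cases hwB : w ∈ B
        · exact Or.inr ⟨⟨hwC, hwD⟩, hwB⟩
        · have hwA : w ∈ A := (hAB.1.1 ▸ mem_univ w : w ∈ A ∪ B).resolve_right hwB
          exact Or.inl ⟨Or.inr ⟨hwA, hwB⟩, fun hT' => hwB hT'.2⟩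
      · exact Or.inl ⟨Or.inl ⟨hwC, hwD⟩, fun hT' => hwD hT'.1.2⟩
    · have hwA : w ∈ A := sep_closure hAB.1 u huA w hadj
      by_cases hwB : w ∈ B
      · have hwC : w ∈ C := hcon w ⟨hwA, hwB⟩
        by_cases hwD : w ∈ D
        · exact Or.inr ⟨⟨hwC, hwD⟩, hwB⟩
        · exact Or.inl ⟨Or.inl ⟨hwC, hwD⟩, fun hT' => hwD hT'.1.2⟩
      · exact Or.inl ⟨Or.inr ⟨hwA, hwB⟩, fun hT' => hwB hT'.2⟩
  have hsep' : IsSeparation G (W ∪ T) (univ \ W) := by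
    constructor
    · ext v
      simp only [Set.mem_union, Set.mem_diff, Set.mem_univ, true_and, iff_true]
      by_cases hv : v ∈ W
      · exact Or.inl (Or.inl hv)
      · exact Or.inr hv
    · rintro a ⟨ha1, ha2⟩ b ⟨hb1, hb2⟩ hadj
      have haW : a ∈ W := by
        rcases ha1 with h | h
        · exact h
        · exact absurd (Or.inr (mem_univ a) : a ∈ W ∪ univ) (by
            intro _
            exact ha2 ⟨mem_univ a, fun haw => hTW a h haw⟩)
      have hbW : b ∉ W ∧ b ∉ T := by
        constructor
        · exact hb1.2
        · intro hbT
          exact hb2 (Or.inr hbT)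
      rcases hWcl a haW b hadj with h | h
      · exact hbW.1 h
      · exact hbW.2 h
  have hCsub : C ⊆ W ∪ T := by
    intro v hv
    by_cases hvD : v ∈ D
    · by_cases hvB : v ∈ B
      · exact Or.inr ⟨⟨hv, hvD⟩, hvB⟩
      · have hvA : v ∈ A := (hAB.1.1 ▸ mem_univ v : v ∈ A ∪ B).resolve_right hvB
        exact Or.inl ⟨Or.inr ⟨hvA, hvB⟩, fun hT' => hvB hT'.2⟩
    · exact Or.inl ⟨Or.inl ⟨hv, hvD⟩, fun hT' => hvD hT'.1.2⟩
  have hint : (W ∪ T) ∩ (univ \ W) = T := by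
    ext v
    simp only [Set.mem_inter_iff, Set.mem_union, Set.mem_diff, Set.mem_univ, true_and]
    constructor
    · rintro ⟨h1 | h1, h2⟩
      · exact absurd h1 h2
      · exact h1
    · intro h
      exact ⟨Or.inr h, hTW v h⟩
  have hord : SepOrder (W ∪ T) (univ \ W) < (k : ℕ∞) := by
    have hTsub : T ⊂ C ∩ D := by
      constructor
      · intro v hv
        exact hv.1
      · intro hsup
        exact hyA.2 (hsup hyS).2
    have := Set.Finite.encard_lt_encard ((rel_sep_finite hCD).subset hTsub.1) hTsub
    rw [SepOrder, hint]
    calc T.encard < (C ∩ D).encard := this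
      _ = (k : ℕ∞) := hCD.2.1
  have hlies : LiesIn G ω (univ \ W) := by
    intro r hr
    obtain ⟨m1, hm1⟩ := hAB.2.2.2.2.1 r hr
    obtain ⟨m2, hm2⟩ := hCD.2.2.2.2.1 r hr
    obtain ⟨m3, hm3⟩ := ray_escape hr.1.1 ((rel_sep_finite hAB).union (rel_sep_finite hCD))
    refine ⟨max m1 (max m2 m3), fun n hn => ?_⟩
    have h1 := hm1 n (le_trans (le_max_left _ _) hn)
    have h2 := hm2 n (le_trans (le_trans (le_max_left _ _) (le_max_right _ _)) hn)
    have h3 := hm3 n (le_trans (le_trans (le_max_right _ _) (le_max_right _ _)) hn)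
    refine ⟨mem_univ _, ?_⟩
    rintro ⟨hw1, _⟩
    rcases hw1 with h | h
    · exact h.2 h2
    · exact h.2 h1
  exact hCD.2.2.2.2.2 ⟨W ∪ T, univ \ W, hsep', hord, hCsub, hlies⟩

/-- a relevant separation is determined by its separator together with a point of `C \ D`. -/
lemma relevant_eq_of_sep_eq {C D C' D' : Set V} {x : V} (hCD : Relevant G ω k C D)
    (hC'D' : Relevant G ω k C' D') (hS : C ∩ D = C' ∩ D')
    (hx : x ∈ C \ D) (hx' : x ∈ C' \ D') : C = C' ∧ D = D' := by
  have step : ∀ (C1 D1 C2 D2 : Set V), Relevant G ω k C1 D1 → Relevant G ω k C2 D2 →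
      C1 ∩ D1 = C2 ∩ D2 → x ∈ C1 \ D1 → x ∈ C2 \ D2 → C1 \ D1 ⊆ C2 \ D2 := by
    intro C1 D1 C2 D2 h1 h2 hSeq hx1 hx2 v hv
    obtain ⟨w, hw⟩ := h1.2.2.1 x hx1 v hv
    refine walk_stay (sep_closure' h2.1) w hx2 ?_ v w.end_mem_support
    intro u hu hu2
    have : u ∈ C1 ∩ D1 := hSeq ▸ hu2
    exact (hw u hu).2 this.2
  have hKeq : C \ D = C' \ D' :=
    Set.Subset.antisymm (step C D C' D' hCD hC'D' hS hx hx')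
      (step C' D' C D hC'D' hCD hS.symm hx' hx)
  have hCeq : C = C' := by
    have e1 : C = (C \ D) ∪ (C ∩ D) := (Set.diff_union_inter C D).symm
    have e2 : C' = (C' \ D') ∪ (C' ∩ D') := (Set.diff_union_inter C' D').symm
    rw [e1, e2, hKeq, hS]
  have hDeq : D = D' := by
    have e1 : ∀ (C1 D1 : Set V), IsSeparation G C1 D1 → D1 = Set.univ \ (C1 \ D1) := by
      intro C1 D1 hsep
      ext v
      simp only [Set.mem_diff, Set.mem_univ, true_and]
      constructor
      · rintro hv ⟨_, hv2⟩
        exact hv2 hv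
      · intro hv
        have : v ∈ C1 ∪ D1 := hsep.1 ▸ mem_univ v
        rcases this with h | h
        · by_contra hvD
          exact hv ⟨h, hvD⟩
        · exact h
    rw [e1 C D hCD.1, e1 C' D' hC'D'.1, hKeq]
  exact ⟨hCeq, hDeq⟩

end RelLemmas


/-- each ω-relevant separation is nested with all but finitely many
ω-relevant separations. -/
theorem finitely_many_not_nested {V : Type} (G : SimpleGraph V) (ω : ℕ → V) (k : ℕ)
    (hω : IsRay G ω) (hdeg : EndVertexDegree G ω k)
    (A B : Set V) (hAB : Relevant G ω k A B) :
    {p : Set V × Set V | Relevant G ω k p.1 p.2 ∧ ¬ Nested A B p.1 p.2}.Finite := by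
  classical
  by_contra hfin
  have hinf : {p : Set V × Set V | Relevant G ω k p.1 p.2 ∧ ¬ Nested A B p.1 p.2}.Infinite := hfin
  -- k is at least 1
  have hk : 1 ≤ k := by
    by_contra hk0
    have hk0' : k = 0 := by omega
    subst hk0'
    refine hdeg.2 ⟨fun _ => ω, fun _ => inEnd_self hω, ?_⟩
    intro i j hij
    have h1 : i.val < 1 := i.isLt
    have h2 : j.val < 1 := j.isLt
    exact absurd (Fin.ext (by omega)) hij
  have hS1fin : (A ∩ B).Finite := rel_sep_finite hAB
  -- pigeonhole a common separator vertex x of (A,B) lying in the small side of each member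
  obtain ⟨x, hxS1, hJ0inf⟩ := pigeonhole_infinite (fun z (p : Set V × Set V) => z ∈ p.1 \ p.2)
    hinf hS1fin (fun p hp => by
      obtain ⟨z, hz⟩ := cross_a hk hAB hp.1 hp.2
      exact ⟨z, hz.1, hz.2⟩)
  set J0 : Set (Set V × Set V) :=
    {p | (Relevant G ω k p.1 p.2 ∧ ¬ Nested A B p.1 p.2) ∧ x ∈ p.1 \ p.2} with hJ0def
  have hJ0inf' : J0.Infinite := hJ0inf
  -- the separator map is injective on J0
  have hinj : Set.InjOn (fun p : Set V × Set V => p.1 ∩ p.2) J0 := by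
    intro p hp q hq he
    obtain ⟨h1, h2⟩ := relevant_eq_of_sep_eq hp.1.1 hq.1.1 he hp.2 hq.2
    exact Prod.ext h1 h2
  have hcards : ∀ p ∈ J0, ((fun p : Set V × Set V => p.1 ∩ p.2) p).Finite ∧
      ((fun p : Set V × Set V => p.1 ∩ p.2) p).ncard ≤ k := by
    intro p hp
    refine ⟨rel_sep_finite hp.1.1, ?_⟩
    have he : (p.1 ∩ p.2).ncard = k := by
      rw [Set.ncard_def, show (p.1 ∩ p.2).encard = (k : ℕ∞) from hp.1.1.2.1]
      simp
    simp only [he]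
    exact le_refl k
  -- sunflower
  obtain ⟨Y, J1, hJ1sub, hJ1inf, hYfin, hker, hpet⟩ :=
    sunflower_lemma k (fun p : Set V × Set V => p.1 ∩ p.2) J0 hJ0inf' hinj hcards
  -- remove the at most one member whose separator is exactly Y
  set J2 : Set (Set V × Set V) := {p ∈ J1 | p.1 ∩ p.2 ≠ Y} with hJ2def
  have hJ2inf : J2.Infinite := by
    have hsmall : (J1 ∩ {p : Set V × Set V | p.1 ∩ p.2 = Y}).Finite := by
      apply Set.Subsingleton.finite
      intro p hp q hq
      exact hinj (hJ1sub hp.1) (hJ1sub hq.1) (hp.2.trans hq.2.symm)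
    refine Set.Infinite.mono ?_ (hJ1inf.diff hsmall)
    rintro p ⟨h1, h2⟩
    refine ⟨h1, fun he => h2 ⟨h1, he⟩⟩
  have hJ2J0 : ∀ p ∈ J2, p ∈ J0 := fun p hp => hJ1sub hp.1
  have hpetne : ∀ p ∈ J2, ((p.1 ∩ p.2) \ Y).Nonempty := by
    intro p hp
    rw [Set.nonempty_iff_ne_empty]
    intro he
    rw [Set.diff_eq_empty] at he
    exact hp.2 (Set.Subset.antisymm he (hker p hp.1))
  obtain ⟨p0, hp0⟩ := hJ2inf.nonempty
  have hxY : x ∉ Y := by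
    intro hxy
    have h1 : x ∈ p0.1 ∩ p0.2 := hker p0 hp0.1 hxy
    exact (hJ2J0 p0 hp0).2.2 h1.2
  obtain ⟨n₀, hn₀⟩ := ray_escape hω.1 hYfin
  -- the component of x avoiding Y
  set Xc : Set V := {v | ∃ w : G.Walk x v, ∀ u ∈ w.support, u ∉ Y} with hXcdef
  have hxXc : x ∈ Xc := by
    refine ⟨SimpleGraph.Walk.nil, ?_⟩
    intro u hu
    rw [SimpleGraph.Walk.support_nil, List.mem_singleton] at hu
    rw [hu]; exact hxY
  have hXcY : ∀ v ∈ Xc, v ∉ Y := by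
    rintro v ⟨w, hw⟩
    exact hw v w.end_mem_support
  have hXcstep : ∀ a b : V, a ∈ Xc → ∀ w : G.Walk a b, (∀ u ∈ w.support, u ∉ Y) → b ∈ Xc := by
    rintro a b ⟨wa, hwa⟩ w hw
    refine ⟨wa.append w, ?_⟩
    intro u hu
    rcases (SimpleGraph.Walk.mem_support_append_iff wa w).1 hu with h | h
    · exact hwa u h
    · exact hw u h
  -- small sides and petals lie in Xc
  have hKXc : ∀ p ∈ J2, p.1 \ p.2 ⊆ Xc := by
    intro p hp v hv
    obtain ⟨w, hw⟩ := (hJ2J0 p hp).1.1.2.2.1 x (hJ2J0 p hp).2 v hv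
    refine hXcstep x v hxXc w ?_
    intro u hu huY
    have huS : u ∈ p.1 ∩ p.2 := hker p hp.1 huY
    exact (hw u hu).2 huS.2
  have hPXc : ∀ p ∈ J2, (p.1 ∩ p.2) \ Y ⊆ Xc := by
    intro p hp v hv
    obtain ⟨u, hu, hadj⟩ := (hJ2J0 p hp).1.1.2.2.2.1 v hv.1
    refine hXcstep u v (hKXc p hp hu) (SimpleGraph.Walk.cons (G.adj_symm hadj) SimpleGraph.Walk.nil) ?_
    intro z hz
    rw [SimpleGraph.Walk.support_cons, SimpleGraph.Walk.support_nil] at hz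
    rcases List.mem_cons.mp hz with he | hz'
    · rw [he]
      exact hXcY u (hKXc p hp hu)
    · rw [List.mem_singleton] at hz'
      rw [hz']
      exact hv.2
  by_cases hwX : ω n₀ ∈ Xc
  · -- the end lives in the component of x
    have htail : ∀ r, InEnd G ω r → ∃ m, ∀ i, m ≤ i → r i ∈ Xc := by
      intro r hr
      obtain ⟨m, n, h1, h2, hreach⟩ := hr.2 Y hYfin
      obtain ⟨wk, hwk⟩ := hreach
      have hωn : ω n ∈ Xc := by
        rcases le_total n₀ n with h | h
        · obtain ⟨w, hw⟩ := ray_walk hω.2 n₀ n h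
          refine hXcstep (ω n₀) (ω n) hwX w ?_
          intro u hu
          obtain ⟨i, hi1, _, hieq⟩ := hw u hu
          rw [← hieq]; exact hn₀ i hi1
        · obtain ⟨w, hw⟩ := ray_walk hω.2 n n₀ h
          refine hXcstep (ω n₀) (ω n) hwX w.reverse ?_
          intro u hu
          rw [SimpleGraph.Walk.support_reverse, List.mem_reverse] at hu
          obtain ⟨i, hi1, _, hieq⟩ := hw u hu
          rw [← hieq]; exact h2 i hi1
      have hrm : r m ∈ Xc := by
        refine hXcstep (ω n) (r m) hωn wk.reverse ?_
        intro u hu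
        rw [SimpleGraph.Walk.support_reverse, List.mem_reverse] at hu
        exact hwk u hu
      refine ⟨m, fun i hi => ?_⟩
      obtain ⟨w, hw⟩ := ray_walk hr.1.2 m i hi
      refine hXcstep (r m) (r i) hrm w ?_
      intro u hu
      obtain ⟨j, hj1, _, hjeq⟩ := hw u hu
      rw [← hjeq]; exact h1 j hj1
    by_cases hSW : ∀ v ∈ Xc, {p ∈ J2 | v ∉ p.1}.Finite
    · by_cases hYne : Y.Nonempty
      · -- k disjoint rays must all cross a petal of size k - |Y| < k
        obtain ⟨f, hfIn, hfDisj⟩ := hdeg.1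
        have hNl : ∀ l : Fin k, ∃ N, ∀ i, N ≤ i → f l i ∈ Xc := fun l => htail (f l) (hfIn l)
        choose N hN using hNl
        have hbadfin : ∀ l : Fin k, {p ∈ J2 | f l (N l) ∉ p.1}.Finite :=
          fun l => hSW _ (hN l (N l) le_rfl)
        have hpetfin : ∀ l : Fin k, {p ∈ J2 | f l (N l) ∈ p.1 ∩ p.2}.Finite := by
          intro l
          apply Set.Subsingleton.finite
          intro p hp q hq
          by_contra hne
          have hc1 : f l (N l) ∈ (p.1 ∩ p.2) \ Y := ⟨hp.2, hXcY _ (hN l (N l) le_rfl)⟩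
          have hc2 : f l (N l) ∈ (q.1 ∩ q.2) \ Y := ⟨hq.2, hXcY _ (hN l (N l) le_rfl)⟩
          have hd := hpet p hp.1.1 q hq.1.1 hne
          have hcontra : f l (N l) ∈ ((p.1 ∩ p.2) \ Y) ∩ ((q.1 ∩ q.2) \ Y) := ⟨hc1, hc2⟩
          rw [hd] at hcontra
          exact hcontra
        have hbig : (J2 \ ((⋃ l, {p ∈ J2 | f l (N l) ∉ p.1}) ∪
            (⋃ l, {p ∈ J2 | f l (N l) ∈ p.1 ∩ p.2}))).Infinite := by
          apply hJ2inf.diff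
          exact Set.Finite.union (Set.finite_iUnion hbadfin) (Set.finite_iUnion hpetfin)
        obtain ⟨js, hjs⟩ := hbig.nonempty
        have hjsJ2 : js ∈ J2 := hjs.1
        have hstart : ∀ l : Fin k, f l (N l) ∈ js.1 \ js.2 := by
          intro l
          have h1 : f l (N l) ∈ js.1 := by
            by_contra h
            exact hjs.2 (Or.inl (Set.mem_iUnion.2 ⟨l, hjsJ2, h⟩))
          have h2 : f l (N l) ∉ js.1 ∩ js.2 := by
            intro h
            exact hjs.2 (Or.inr (Set.mem_iUnion.2 ⟨l, hjsJ2, h⟩))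
          exact ⟨h1, fun hD => h2 ⟨h1, hD⟩⟩
        have hcx : ∀ l : Fin k, ∃ i, N l ≤ i ∧ f l i ∈ js.1 ∩ js.2 := by
          intro l
          obtain ⟨m2, hm2⟩ := (hJ2J0 js hjsJ2).1.1.2.2.2.2.1 (f l) (hfIn l)
          obtain ⟨m3, hm3⟩ := ray_escape (hfIn l).1.1 (rel_sep_finite (hJ2J0 js hjsJ2).1.1)
          obtain ⟨w, hw⟩ := ray_walk (hfIn l).1.2 (N l) (max (N l) (max m2 m3)) (le_max_left _ _)
          have hend : f l (max (N l) (max m2 m3)) ∉ (js.1 \ js.2) ∪ (js.1 ∩ js.2) := by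
            intro h
            have hD : f l (max (N l) (max m2 m3)) ∈ js.2 :=
              hm2 _ (le_trans (le_max_left _ _) (le_max_right _ _))
            have hnS : f l (max (N l) (max m2 m3)) ∉ js.1 ∩ js.2 :=
              hm3 _ (le_trans (le_max_right _ _) (le_max_right _ _))
            rcases h with h | h
            · exact h.2 hD
            · exact hnS h
          obtain ⟨v, hv1, hv2⟩ := walk_cross (sep_closure' (hJ2J0 js hjsJ2).1.1.1) w (hstart l) hend
          obtain ⟨i, hi1, _, hieq⟩ := hw v hv1
          exact ⟨i, hi1, hieq ▸ hv2⟩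
        choose idx hidx1 hidx2 using hcx
        obtain ⟨y₀, hy₀⟩ := hYne
        have hcY : ∀ l, f l (idx l) ∉ Y := fun l => hXcY _ (hN l (idx l) (hidx1 l))
        have hfinj : Function.Injective (fun l : Fin k => f l (idx l)) := by
          intro l l' he
          by_contra hne
          exact Set.disjoint_left.1 (hfDisj hne) ⟨idx l, rfl⟩ ⟨idx l', he.symm⟩
        have hcard1 : (Finset.univ.image (fun l : Fin k => f l (idx l))).card = k := by
          rw [Finset.card_image_of_injective _ hfinj, Finset.card_univ, Fintype.card_fin]
        have hy₀notmem : y₀ ∉ Finset.univ.image (fun l : Fin k => f l (idx l)) := by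
          intro h
          rw [Finset.mem_image] at h
          obtain ⟨l, _, he⟩ := h
          exact hcY l (he ▸ hy₀)
        have hsub' : (↑(insert y₀ (Finset.univ.image (fun l : Fin k => f l (idx l)))) : Set V) ⊆
            js.1 ∩ js.2 := by
          intro v hv
          have hv' : v ∈ insert y₀ (Finset.univ.image (fun l : Fin k => f l (idx l))) := by
            exact_mod_cast hv
          rw [Finset.mem_insert] at hv'
          rcases hv' with rfl | hv'
          · exact hker js hjsJ2.1 hy₀
          · rw [Finset.mem_image] at hv'
            obtain ⟨l, _, he⟩ := hv'
            exact he ▸ hidx2 l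
        have hle := Set.ncard_le_ncard hsub' (rel_sep_finite (hJ2J0 js hjsJ2).1.1)
        rw [Set.ncard_coe_finset, Finset.card_insert_of_notMem hy₀notmem, hcard1] at hle
        have hnk : (js.1 ∩ js.2).ncard = k := by
          rw [Set.ncard_def, show (js.1 ∩ js.2).encard = (k : ℕ∞) from (hJ2J0 js hjsJ2).1.1.2.1]
          simp
        omega
      · -- Y is empty : use a second separator vertex of (A,B)
        rw [Set.not_nonempty_iff_eq_empty] at hYne
        have hz : ∀ p ∈ J2, ∃ z ∈ A ∩ B, z ∉ p.1 := by
          intro p hp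
          exact exists_outside_C hAB (hJ2J0 p hp).1.1
            (cross_b hk hAB (hJ2J0 p hp).1.1 (hJ2J0 p hp).1.2)
        obtain ⟨z, hzS1, hzinf⟩ := pigeonhole_infinite
          (fun z (p : Set V × Set V) => z ∉ p.1) hJ2inf hS1fin hz
        have hNoY : ∀ q : V, q ∉ Y := by
          rw [hYne]; exact fun q => Set.notMem_empty q
        have hzXc : z ∈ Xc := by
          obtain ⟨u, hu, hadj⟩ := hAB.2.2.2.1 x hxS1
          obtain ⟨u', hu', hadj'⟩ := hAB.2.2.2.1 z hzS1
          obtain ⟨w, hw⟩ := hAB.2.2.1 u hu u' hu'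
          refine hXcstep u' z ?_ (SimpleGraph.Walk.cons (G.adj_symm hadj') SimpleGraph.Walk.nil)
            (fun q _ => hNoY q)
          refine hXcstep u u' ?_ w (fun q _ => hNoY q)
          exact hXcstep x u hxXc (SimpleGraph.Walk.cons hadj SimpleGraph.Walk.nil)
            (fun q _ => hNoY q)
        exact hzinf (hSW z hzXc)
    · -- some vertex of Xc stays outside infinitely many members : a fixed finite walk
      -- must cross infinitely many pairwise disjoint petals
      push_neg at hSW
      obtain ⟨vstar, hvXc, hvinf⟩ := hSW
      obtain ⟨π, hπ⟩ := hvXc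
      have hcross : ∀ p ∈ {p ∈ J2 | vstar ∉ p.1}, ∃ c ∈ π.support, c ∈ (p.1 ∩ p.2) \ Y := by
        intro p hp
        have hxK : x ∈ p.1 \ p.2 := (hJ2J0 p hp.1).2
        have hb : vstar ∉ (p.1 \ p.2) ∪ (p.1 ∩ p.2) := by
          rw [Set.diff_union_inter]
          exact hp.2
        obtain ⟨c, hc1, hc2⟩ := walk_cross (sep_closure' (hJ2J0 p hp.1).1.1.1) π hxK hb
        exact ⟨c, hc1, hc2, hπ c hc1⟩
      choose cc hcc1 hcc2 using hcross
      have hfinJb : {p ∈ J2 | vstar ∉ p.1}.Finite := by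
        have hmap : {p ∈ J2 | vstar ∉ p.1} ⊆
            ⋃ c ∈ {c : V | c ∈ π.support}, {p ∈ J2 | c ∈ (p.1 ∩ p.2) \ Y} := by
          intro p hp
          exact Set.mem_biUnion (hcc1 p hp) ⟨hp.1, hcc2 p hp⟩
        refine Set.Finite.subset ?_ hmap
        refine Set.Finite.biUnion π.support.finite_toSet ?_
        intro c _
        apply Set.Subsingleton.finite
        intro p hp q hq
        by_contra hne
        have hd := hpet p hp.1.1 q hq.1.1 hne
        have hcontra : c ∈ ((p.1 ∩ p.2) \ Y) ∩ ((q.1 ∩ q.2) \ Y) := ⟨hp.2, hq.2⟩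
        rw [hd] at hcontra
        exact hcontra
      exact hvinf hfinJb
  · -- the end lives in another component of G - Y : contradicts minimality of a member
    set Xω : Set V := {v | ∃ w : G.Walk (ω n₀) v, ∀ u ∈ w.support, u ∉ Y} with hXωdef
    have hXωY : ∀ v ∈ Xω, v ∉ Y := by
      rintro v ⟨w, hw⟩
      exact hw v w.end_mem_support
    have hXωstep : ∀ a b : V, a ∈ Xω → ∀ w : G.Walk a b, (∀ u ∈ w.support, u ∉ Y) → b ∈ Xω := by
      rintro a b ⟨wa, hwa⟩ w hw
      refine ⟨wa.append w, ?_⟩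
      intro u hu
      rcases (SimpleGraph.Walk.mem_support_append_iff wa w).1 hu with h | h
      · exact hwa u h
      · exact hw u h
    have hωn₀Xω : ω n₀ ∈ Xω := by
      refine ⟨SimpleGraph.Walk.nil, ?_⟩
      intro u hu
      rw [SimpleGraph.Walk.support_nil, List.mem_singleton] at hu
      rw [hu]; exact hn₀ n₀ le_rfl
    have hdisjc : ∀ v, v ∈ Xω → v ∈ Xc → False := by
      rintro v ⟨w1, hw1⟩ hv2
      apply hwX
      refine hXcstep v (ω n₀) hv2 w1.reverse ?_
      intro u hu
      rw [SimpleGraph.Walk.support_reverse, List.mem_reverse] at hu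
      exact hw1 u hu
    have hC0sub : p0.1 ⊆ Set.univ \ Xω := by
      intro v hv
      refine ⟨mem_univ v, fun hvXω => ?_⟩
      by_cases hvD : v ∈ p0.2
      · by_cases hvY : v ∈ Y
        · exact hXωY v hvXω hvY
        · exact hdisjc v hvXω (hPXc p0 hp0 ⟨⟨hv, hvD⟩, hvY⟩)
      · exact hdisjc v hvXω (hKXc p0 hp0 ⟨hv, hvD⟩)
    have hsepA : IsSeparation G (Set.univ \ Xω) (Xω ∪ Y) := by
      constructor
      · ext v
        simp only [Set.mem_union, Set.mem_diff, Set.mem_univ, true_and, iff_true]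
        by_cases hv : v ∈ Xω
        · exact Or.inr (Or.inl hv)
        · exact Or.inl hv
      · rintro a ⟨ha1, ha2⟩ b ⟨hb1, hb2⟩ hadj
        have haXω : a ∉ Xω := fun h => ha2 (Or.inl h)
        have haY : a ∉ Y := fun h => ha2 (Or.inr h)
        have hbXω : b ∈ Xω := by
          by_contra hbX
          exact hb2 ⟨mem_univ b, hbX⟩
        refine haXω (hXωstep b a hbXω
          (SimpleGraph.Walk.cons (G.adj_symm hadj) SimpleGraph.Walk.nil) ?_)
        intro z hz
        rw [SimpleGraph.Walk.support_cons, SimpleGraph.Walk.support_nil] at hz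
        rcases List.mem_cons.mp hz with he | hz'
        · rw [he]
          exact hXωY b hbXω
        · rw [List.mem_singleton] at hz'
          rw [hz']; exact haY
    have hintA : (Set.univ \ Xω) ∩ (Xω ∪ Y) = Y := by
      ext v
      simp only [Set.mem_inter_iff, Set.mem_diff, Set.mem_univ, true_and, Set.mem_union]
      constructor
      · rintro ⟨h1, h2 | h2⟩
        · exact absurd h2 h1
        · exact h2
      · intro h
        exact ⟨fun hx' => hXωY v hx' h, Or.inr h⟩
    have hordA : SepOrder (Set.univ \ Xω) (Xω ∪ Y) < (k : ℕ∞) := by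
      obtain ⟨q0, hq0⟩ := hpetne p0 hp0
      have hYsub : Y ⊂ p0.1 ∩ p0.2 := ⟨hker p0 hp0.1, fun hsup => hq0.2 (hsup hq0.1)⟩
      have hlt := Set.Finite.encard_lt_encard ((rel_sep_finite (hJ2J0 p0 hp0).1.1).subset hYsub.1) hYsub
      rw [SepOrder, hintA]
      calc Y.encard < (p0.1 ∩ p0.2).encard := hlt
        _ = (k : ℕ∞) := (hJ2J0 p0 hp0).1.1.2.1
    have hliesA : LiesIn G ω (Xω ∪ Y) := by
      intro r hr
      obtain ⟨m, n, h1, h2, hreach⟩ := hr.2 Y hYfin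
      obtain ⟨wk, hwk⟩ := hreach
      have hωn : ω n ∈ Xω := by
        rcases le_total n₀ n with h | h
        · obtain ⟨w, hw⟩ := ray_walk hω.2 n₀ n h
          refine hXωstep (ω n₀) (ω n) hωn₀Xω w ?_
          intro u hu
          obtain ⟨i, hi1, _, hieq⟩ := hw u hu
          rw [← hieq]; exact hn₀ i hi1
        · obtain ⟨w, hw⟩ := ray_walk hω.2 n n₀ h
          refine hXωstep (ω n₀) (ω n) hωn₀Xω w.reverse ?_
          intro u hu
          rw [SimpleGraph.Walk.support_reverse, List.mem_reverse] at hu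
          obtain ⟨i, hi1, _, hieq⟩ := hw u hu
          rw [← hieq]; exact h2 i hi1
      have hrm : r m ∈ Xω := by
        refine hXωstep (ω n) (r m) hωn wk.reverse ?_
        intro u hu
        rw [SimpleGraph.Walk.support_reverse, List.mem_reverse] at hu
        exact hwk u hu
      refine ⟨m, fun i hi => Or.inl ?_⟩
      obtain ⟨w, hw⟩ := ray_walk hr.1.2 m i hi
      refine hXωstep (r m) (r i) hrm w ?_
      intro u hu
      obtain ⟨j, hj1, _, hjeq⟩ := hw u hu
      rw [← hjeq]; exact h1 j hj1
    exact (hJ2J0 p0 hp0).1.1.2.2.2.2.2 ⟨Set.univ \ Xω, Xω ∪ Y, hsepA, hordA, hC0sub, hliesA⟩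

end PaperEnds
end

section
/- If T is a one-ended tree and R is a ray in T, then every automorphism of T fixes some tail of R pointwise. -/
open Set Cardinal

namespace PaperEnds

section AuxLemmas

open SimpleGraph

variable {τ : Type} {T : SimpleGraph τ}

/-- walk along a ray -/
def rayWalk {r : ℕ → τ} (hr : ∀ n, T.Adj (r n) (r (n+1))) (a : ℕ) :
    (k : ℕ) → T.Walk (r a) (r (a + k))
  | 0 => Walk.nil
  | k+1 => (rayWalk hr a k).concat (hr (a+k))

lemma rayWalk_support {r : ℕ → τ} (hr : ∀ n, T.Adj (r n) (r (n+1))) (a k : ℕ) :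
    (rayWalk hr a k).support = (List.range (k+1)).map (fun i => r (a+i)) := by
  induction k with
  | zero => simp [rayWalk, List.range_succ]
  | succ k ih =>
      rw [rayWalk, Walk.support_concat, ih]
      simp [List.range_succ]

lemma mem_rayWalk_support {r : ℕ → τ} (hr : ∀ n, T.Adj (r n) (r (n+1))) {a k : ℕ} {x : τ} :
    x ∈ (rayWalk hr a k).support ↔ ∃ i, i ≤ k ∧ x = r (a+i) := by
  simp [rayWalk_support, Nat.lt_succ_iff, eq_comm]

lemma rayWalk_isPath {r : ℕ → τ} (hinj : Function.Injective r)
    (hr : ∀ n, T.Adj (r n) (r (n+1))) (a k : ℕ) :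
    (rayWalk hr a k).IsPath := by
  rw [Walk.isPath_def, rayWalk_support]
  refine List.Nodup.map ?_ List.nodup_range
  intro i j hij
  exact Nat.add_left_cancel (hinj hij)

lemma rayWalk_length {r : ℕ → τ} (hr : ∀ n, T.Adj (r n) (r (n+1))) (a k : ℕ) :
    (rayWalk hr a k).length = k := by
  induction k with
  | zero => rfl
  | succ k ih => rw [rayWalk, Walk.length_concat, ih]

noncomputable def tpath (htree : T.IsTree) (u v : τ) : T.Walk u v :=
  (htree.existsUnique_path u v).exists.choose

lemma tpath_isPath (htree : T.IsTree) (u v : τ) : (tpath htree u v).IsPath :=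
  (htree.existsUnique_path u v).exists.choose_spec

lemma eq_tpath (htree : T.IsTree) {u v : τ} {p : T.Walk u v} (hp : p.IsPath) :
    p = tpath htree u v := by
  obtain ⟨q, hq, hu⟩ := htree.existsUnique_path u v
  rw [hu p hp, hu _ (tpath_isPath htree u v)]

lemma tpath_support_subset (htree : T.IsTree) {u v : τ} (w : T.Walk u v) :
    (tpath htree u v).support ⊆ w.support := by
  classical
  rw [← eq_tpath htree w.bypass_isPath]
  exact w.support_bypass_subset

lemma isPath_append {u v w : τ} {p : T.Walk u v} {q : T.Walk v w}
    (hp : p.IsPath) (hq : q.IsPath)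
    (h : ∀ x, x ∈ p.support → x ∈ q.support → x = v) : (p.append q).IsPath := by
  rw [Walk.isPath_def, Walk.support_append]
  refine List.Nodup.append hp.support_nodup hq.support_nodup.tail ?_
  intro x hxp hxq
  have hx := h x hxp (List.mem_of_mem_tail hxq)
  subst hx
  have hnd := hq.support_nodup
  rw [q.support_eq_cons] at hnd
  exact (List.nodup_cons.mp hnd).1 hxq


lemma ray_adj_aux (htree : T.IsTree) {r : ℕ → τ} (hr : IsRay T r) (i k : ℕ)
    (h : T.Adj (r i) (r (i+k))) : k = 1 := by
  have hedge : (Walk.cons h Walk.nil).IsPath := by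
    simp [Walk.isPath_def, h.ne]
  have h1 := eq_tpath htree hedge
  have h2 := eq_tpath htree (rayWalk_isPath hr.1 hr.2 i k)
  have h3 : (rayWalk hr.2 i k).length = (Walk.cons h Walk.nil).length := by
    rw [h1, h2]
  rw [rayWalk_length] at h3
  simpa using h3

lemma ray_adj_index (htree : T.IsTree) {r : ℕ → τ} (hr : IsRay T r) {i j : ℕ}
    (h : T.Adj (r i) (r j)) : j = i + 1 ∨ i = j + 1 := by
  rcases Nat.lt_trichotomy i j with hij | hij | hij
  · left
    have h' : T.Adj (r i) (r (i + (j - i))) := by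
      rw [show i + (j - i) = j from by omega]; exact h
    have := ray_adj_aux htree hr i (j - i) h'
    omega
  · exact absurd (congrArg r hij) h.ne
  · right
    have h' : T.Adj (r j) (r (j + (i - j))) := by
      rw [show j + (i - j) = i from by omega]; exact h.symm
    have := ray_adj_aux htree hr j (i - j) h'
    omega

lemma shared_tail (htree : T.IsTree) {r₁ r₂ : ℕ → τ}
    (h₁ : IsRay T r₁) (h₂ : IsRay T r₂) (heq : RayEquiv T r₁ r₂) :
    ∃ a b, ∀ t, r₁ (a + t) = r₂ (b + t) := by
  have stepA : ∀ N : ℕ, ∃ n : ℕ, ∀ t : ℕ,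
      r₁ N ∈ (tpath htree (r₁ 0) (r₂ (n + t))).support := by
    intro N
    obtain ⟨m, n, hm, hn, w, hw⟩ := heq {r₁ N} (Set.finite_singleton _)
    have hNm : N < m := by
      by_contra hc
      exact hm N (by omega) (Set.mem_singleton _)
    refine ⟨n, fun t => ?_⟩
    by_contra hc
    have hw'avoid : ∀ x ∈ (w.append (rayWalk h₂.2 n t)).support, x ≠ r₁ N := by
      intro x hx
      rw [Walk.mem_support_append_iff] at hx
      rcases hx with hx | hx
      · exact fun e => hw x hx (by rw [e]; exact Set.mem_singleton _)
      · rw [mem_rayWalk_support] at hx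
        obtain ⟨i, hi, rfl⟩ := hx
        exact fun e => hn (n+i) (by omega) (by rw [e]; exact Set.mem_singleton _)
    have hNpath : r₁ N ∈ (tpath htree (r₁ 0) (r₁ m)).support := by
      have hcopy : ((rayWalk h₁.2 0 m).copy rfl (congrArg r₁ (Nat.zero_add m)))
          = tpath htree (r₁ 0) (r₁ m) := by
        apply eq_tpath htree
        rw [Walk.isPath_copy]
        exact rayWalk_isPath h₁.1 h₁.2 0 m
      rw [← hcopy, Walk.support_copy, mem_rayWalk_support]
      exact ⟨N, by omega, congrArg r₁ (Nat.zero_add N).symm⟩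
    have hbig := tpath_support_subset htree
      ((tpath htree (r₁ 0) (r₂ (n+t))).append (w.append (rayWalk h₂.2 n t)).reverse) hNpath
    rw [Walk.mem_support_append_iff] at hbig
    rcases hbig with hb | hb
    · exact hc hb
    · rw [Walk.support_reverse, List.mem_reverse] at hb
      exact hw'avoid _ hb rfl
  have stepB : ∀ j : ℕ, ∀ x ∈ (tpath htree (r₁ 0) (r₂ j)).support,
      x ∈ (tpath htree (r₁ 0) (r₂ 0)).support ∨ x ∈ Set.range r₂ := by
    have h0 : ∀ t : ℕ, ∀ y, y ∈ (tpath htree (r₁ 0) (r₂ (0 + t))).support →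
        y ∈ (tpath htree (r₁ 0) (r₂ 0)).support ∨ y ∈ Set.range r₂ := by
      intro t y hy
      have hsub := tpath_support_subset htree
        ((tpath htree (r₁ 0) (r₂ 0)).append (rayWalk h₂.2 0 t)) hy
      rw [Walk.mem_support_append_iff] at hsub
      rcases hsub with h | h
      · exact Or.inl h
      · rw [mem_rayWalk_support] at h
        obtain ⟨i, _, rfl⟩ := h
        exact Or.inr ⟨0 + i, rfl⟩
    intro j x hx
    have hh := h0 j x
    rw [Nat.zero_add] at hh
    exact hh hx
  have hfin : {N : ℕ | r₁ N ∈ (tpath htree (r₁ 0) (r₂ 0)).support}.Finite := by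
    have hsub : {N : ℕ | r₁ N ∈ (tpath htree (r₁ 0) (r₂ 0)).support} ⊆
        r₁ ⁻¹' {x | x ∈ (tpath htree (r₁ 0) (r₂ 0)).support} := fun N hN => hN
    exact Set.Finite.subset (Set.Finite.preimage h₁.1.injOn
      (List.finite_toSet _)) hsub
  obtain ⟨B, hB⟩ := hfin.bddAbove
  have hrange : ∀ k : ℕ, ∃ j, r₁ (B + 1 + k) = r₂ j := by
    intro k
    obtain ⟨n, hnA⟩ := stepA (B + 1 + k)
    rcases stepB (n + 0) _ (hnA 0) with h | h
    · exact absurd (hB h) (by omega)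
    · obtain ⟨j, hj⟩ := h
      exact ⟨j, hj.symm⟩
  choose D hD using hrange
  have hDinj : Function.Injective D := by
    intro k k' hkk
    have h1 : r₁ (B + 1 + k) = r₁ (B + 1 + k') := by rw [hD, hD, hkk]
    have := h₁.1 h1
    omega
  have hstep : ∀ k, D (k+1) = D k + 1 ∨ D k = D (k+1) + 1 := by
    intro k
    have hadj : T.Adj (r₂ (D k)) (r₂ (D (k+1))) := by
      rw [← hD, ← hD]
      exact h₁.2 (B + 1 + k)
    rcases ray_adj_index htree h₂ hadj with h | h
    · exact Or.inl h
    · exact Or.inr h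
  have hup : ∃ k₁, D (k₁ + 1) = D k₁ + 1 := by
    by_contra hc
    push_neg at hc
    have hdown : ∀ k, D k = D (k+1) + 1 := fun k => (hstep k).resolve_left (hc k)
    have hval : ∀ k, D k + k = D 0 := by
      intro k
      induction k with
      | zero => rfl
      | succ k ih =>
          have := hdown k
          omega
    have := hval (D 0 + 1)
    omega
  obtain ⟨k₁, hk₁⟩ := hup
  have hchain : ∀ t, D (k₁ + t) = D k₁ + t ∧ D (k₁ + t + 1) = D k₁ + t + 1 := by
    intro t
    induction t with
    | zero => exact ⟨rfl, hk₁⟩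
    | succ t ih =>
        refine ⟨ih.2, ?_⟩
        show D (k₁ + t + 1 + 1) = D k₁ + t + 1 + 1
        rcases hstep (k₁ + t + 1) with h | h
        · rw [h, ih.2]
        · exfalso
          have heq2 : D (k₁ + t + 1 + 1) = D (k₁ + t) := by omega
          have := hDinj heq2
          omega
  refine ⟨B + 1 + k₁, D k₁, fun t => ?_⟩
  have h1 : r₁ (B + 1 + (k₁ + t)) = r₂ (D (k₁ + t)) := hD (k₁ + t)
  rw [(hchain t).1] at h1
  rw [show B + 1 + k₁ + t = B + 1 + (k₁ + t) from by omega]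
  exact h1
lemma no_shift (htree : T.IsTree) (hone : OneEnded T)
    {R : ℕ → τ} (hR : IsRay T R) (ψ : T ≃g T) (b d : ℕ) (hd : 0 < d)
    (hsh : ∀ t, ψ (R (b + t)) = R (b + d + t)) : False := by
  have hgf : Function.LeftInverse (⇑ψ.symm) (⇑ψ) := fun x => ψ.symm_apply_apply x
  have hfg : Function.LeftInverse (⇑ψ) (⇑ψ.symm) := fun x => ψ.apply_symm_apply x
  have hF : ∀ j t, (⇑ψ)^[j] (R (b + t)) = R (b + j * d + t) := by
    intro j
    induction j with
    | zero =>
        intro t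
        show R (b + t) = R (b + 0 * d + t)
        rw [Nat.zero_mul, Nat.add_zero]
    | succ j ih =>
        intro t
        rw [Function.iterate_succ_apply', ih t,
          show b + j * d + t = b + (j * d + t) from by omega, hsh (j * d + t)]
        exact congrArg R (by ring)
  have hS : ∀ j t, (⇑ψ.symm)^[j] (R (b + j * d + t)) = R (b + t) := by
    intro j t
    rw [← hF j t]
    exact (hgf.iterate j) _
  have hginj : ∀ j : ℕ, Function.Injective ((⇑ψ.symm)^[j]) :=
    fun j => (hfg.injective).iterate j
  set Q : ℕ → τ := fun j => (⇑ψ.symm)^[j] (R (b + j * (d - 1))) with hQdef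
  have hQ0 : Q 0 = R b := by
    show R (b + 0 * (d - 1)) = R b
    rw [Nat.zero_mul, Nat.add_zero]
  have hgadj : ∀ (j : ℕ) (x y : τ), T.Adj x y → T.Adj ((⇑ψ.symm)^[j] x) ((⇑ψ.symm)^[j] y) := by
    intro j
    induction j with
    | zero => intro x y h; exact h
    | succ j ih =>
        intro x y h
        rw [Function.iterate_succ_apply', Function.iterate_succ_apply']
        exact ψ.symm.map_adj_iff.mpr (ih x y h)
  have hQadj : ∀ j, T.Adj (Q j) (Q (j + 1)) := by
    intro j
    have e1 : Q j = (⇑ψ.symm)^[j+1] (R (b + d + j * (d - 1))) := by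
      show (⇑ψ.symm)^[j] (R (b + j * (d - 1))) = _
      rw [Function.iterate_succ_apply, ← hsh (j * (d - 1)), ψ.symm_apply_apply]
    have e2 : Q (j+1) = (⇑ψ.symm)^[j+1] (R (b + (j+1) * (d - 1))) := rfl
    rw [e1, e2]
    apply hgadj
    rw [show b + d + j * (d - 1) = (b + (j+1) * (d - 1)) + 1 from by
      rw [Nat.succ_mul]; omega]
    exact (hR.2 _).symm
  have hQR : ∀ j k, Q j = R (b + k) → j = 0 ∧ k = 0 := by
    intro j k h
    rw [← hS j k] at h
    have h3 := hR.1 (hginj j h)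
    have h6 : j * d = j * (d - 1) + j := by
      conv_lhs => rw [show d = (d - 1) + 1 from by omega]
      rw [Nat.mul_succ]
    omega
  have haux : ∀ i s, Q i = Q (i + s) → s = 0 := by
    intro i s h
    have h2 : (⇑ψ)^[i] (Q (i + s)) = (⇑ψ.symm)^[s] (R (b + (i + s) * (d - 1))) := by
      show (⇑ψ)^[i] ((⇑ψ.symm)^[i + s] (R (b + (i + s) * (d - 1)))) = _
      rw [Function.iterate_add_apply]
      exact (hfg.iterate i) _
    have h1 : (⇑ψ)^[i] (Q i) = R (b + i * (d - 1)) := (hfg.iterate i) _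
    rw [h] at h1
    rw [h2] at h1
    -- h1 : (⇑ψ.symm)^[s] (R (b + (i+s) * (d-1))) = R (b + i * (d-1))
    have h4 := congrArg ((⇑ψ)^[s]) h1
    rw [hfg.iterate s _, hF s (i * (d - 1))] at h4
    have h5 := hR.1 h4
    have hmul : (i + s) * (d - 1) = i * (d - 1) + s * (d - 1) := Nat.add_mul i s (d - 1)
    have h6 : s * d = s * (d - 1) + s := by
      conv_lhs => rw [show d = (d - 1) + 1 from by omega]
      rw [Nat.mul_succ]
    omega
  have hQinj : Function.Injective Q := by
    intro i j h
    rcases Nat.le_total i j with hij | hij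
    · have := haux i (j - i) (by rw [show i + (j - i) = j from by omega]; exact h)
      omega
    · have := haux j (i - j) (by rw [show j + (i - j) = i from by omega]; exact h.symm)
      omega
  have hQray : IsRay T Q := ⟨hQinj, hQadj⟩
  have hR'ray : IsRay T (fun k => R (b + k)) := by
    constructor
    · intro x y h
      have := hR.1 h
      omega
    · intro k
      exact hR.2 (b + k)
  obtain ⟨m, n, hm, hn, w, hw⟩ :=
    hone.2 Q (fun k => R (b + k)) hQray hR'ray {R b} (Set.finite_singleton _)
  have hm0 : m ≠ 0 := by
    rintro rfl
    exact hm 0 le_rfl (by rw [hQ0]; exact Set.mem_singleton _)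
  have hn0 : n ≠ 0 := by
    rintro rfl
    exact hn 0 le_rfl (Set.mem_singleton _)
  -- build the unique path from Q m to R (b + n) through R b
  have hW1 : ((rayWalk hQadj 0 m).copy hQ0 (congrArg Q (Nat.zero_add m))).reverse.IsPath := by
    rw [Walk.isPath_reverse_iff, Walk.isPath_copy]
    exact rayWalk_isPath hQinj hQadj 0 m
  have hW2 : ((rayWalk hR'ray.2 0 n).copy rfl
      (congrArg (fun k => R (b + k)) (Nat.zero_add n))).IsPath := by
    rw [Walk.isPath_copy]
    exact rayWalk_isPath hR'ray.1 hR'ray.2 0 n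
  set P : T.Walk (Q m) (R (b + n)) :=
    ((rayWalk hQadj 0 m).copy hQ0 (congrArg Q (Nat.zero_add m))).reverse.append
      ((rayWalk hR'ray.2 0 n).copy rfl (congrArg (fun k => R (b + k)) (Nat.zero_add n)))
    with hPdef
  have hP : P.IsPath := by
    apply isPath_append hW1 hW2
    intro x hx1 hx2
    rw [Walk.support_reverse, List.mem_reverse, Walk.support_copy,
      mem_rayWalk_support] at hx1
    rw [Walk.support_copy, mem_rayWalk_support] at hx2
    obtain ⟨i, hi, rfl⟩ := hx1
    obtain ⟨k, hk, he⟩ := hx2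
    have := hQR (0 + i) (0 + k) he
    rw [show (0:ℕ) + i = 0 from by omega]
    exact hQ0
  have hmem : R b ∈ P.support := by
    rw [hPdef]
    apply Walk.subset_support_append_left
    exact Walk.end_mem_support _
  have hPsub : P.support ⊆ w.support := by
    rw [eq_tpath htree hP]
    exact tpath_support_subset htree w
  exact hw (R b) (hPsub hmem) (Set.mem_singleton _)

end AuxLemmas

/-- every automorphism of a one-ended tree fixes a tail of every ray
pointwise. -/
theorem tree_automorphism_fixes_tail {τ : Type} (T : SimpleGraph τ)
    (htree : T.IsTree) (hone : OneEnded T)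
    (R : ℕ → τ) (hR : IsRay T R) (φ : T ≃g T) :
    ∃ m : ℕ, ∀ n, m ≤ n → φ (R n) = R n := by
  have hr₂ : IsRay T (fun n => φ (R n)) := by
    constructor
    · intro x y h
      exact hR.1 (φ.toEquiv.injective h)
    · intro n
      exact φ.map_adj_iff.mpr (hR.2 n)
  obtain ⟨a, b, hab'⟩ := shared_tail htree hR hr₂ (hone.2 R _ hR hr₂)
  have hab : ∀ t, R (a + t) = φ (R (b + t)) := hab'
  rcases Nat.lt_trichotomy a b with h | h | h
  · exfalso
    apply no_shift htree hone hR φ.symm a (b - a) (by omega)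
    intro t
    have h2 : φ.symm (R (a + t)) = R (b + t) := by
      rw [hab t]
      exact φ.symm_apply_apply _
    rw [h2]
    exact congrArg R (by omega)
  · subst h
    refine ⟨a, fun n hn => ?_⟩
    have h1 := hab (n - a)
    rw [show a + (n - a) = n from by omega] at h1
    exact h1.symm
  · exfalso
    apply no_shift htree hone hR φ b (a - b) (by omega)
    intro t
    rw [← hab t]
    exact congrArg R (by omega)

end PaperEnds
end
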